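/- Let σ : ℝ → ℝ be Lipschitz with constant τ_σ ≥ 0, applied to matrices entrywise. Fix K ≥ 1, matrices Ψ_i, Ψ_j ∈ ℝ^{n×n}, weight matrices W¹,…,W^K ∈ ℝ^{d×d}, and a common initial matrix H⁰ ∈ ℝ^{n×d}. Define recursively H_i^l = σ(Ψ_i H_i^{l−1} W^l) and H_j^l = σ(Ψ_j H_j^{l−1} W^l) for l = 1,…,K, with H_i^0 = H_j^0 = H⁰. Suppose τ_w, τ_h, τ_l ≥ 0 satisfy ‖W^l‖₂ ≤ τ_w for all l, ‖H_i^l‖_F ≤ τ_h for all 0 ≤ l ≤ K−1, and ‖Ψ_j‖₂ ≤ τ_l, and set b = τ_σ·τ_w·τ_l. Then ‖H_i^K − H_j^K‖_F ≤ (∑_{t=0}^{K−1} b^t) · τ_σ·τ_w·τ_h · ‖Ψ_i − Ψ_j‖₂; in particular, if b ≠ 1, then ‖H_i^K − H_j^K‖_F ≤ ((b^K − 1)/(b − 1)) · τ_σ·τ_w·τ_h · ‖Ψ_i − Ψ_j‖₂. -/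

import Mathlib

/-- The ℓ2 operator norm (spectral norm) of a real matrix, i.e. the operator norm of
the induced linear map between Euclidean spaces. -/
noncomputable def matOpNorm {n d : ℕ} (A : Matrix (Fin n) (Fin d) ℝ) : ℝ :=
  ‖LinearMap.toContinuousLinearMap (Matrix.toEuclideanLin A)‖

/-- The Frobenius norm of a real matrix: the square root of the sum of squares of its
entries. -/
noncomputable def frobNorm {n d : ℕ} (A : Matrix (Fin n) (Fin d) ℝ) : ℝ :=
  Real.sqrt (∑ i, ∑ j, (A i j) ^ 2)

open Matrix in
lemma matOpNorm_nonneg {n d : ℕ} (A : Matrix (Fin n) (Fin d) ℝ) : 0 ≤ matOpNorm A :=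
  norm_nonneg _

open Matrix in
lemma matOpNorm_transpose {n d : ℕ} (A : Matrix (Fin n) (Fin d) ℝ) :
    matOpNorm Aᵀ = matOpNorm A := by
  have h : Aᵀ = Aᴴ := by ext i j; simp [Matrix.conjTranspose_apply]
  rw [matOpNorm, matOpNorm, h, Matrix.toEuclideanLin_conjTranspose_eq_adjoint,
    LinearMap.adjoint_toContinuousLinearMap]
  exact ContinuousLinearMap.adjoint.norm_map _

lemma frobNorm_nonneg' {n d : ℕ} (A : Matrix (Fin n) (Fin d) ℝ) : 0 ≤ frobNorm A :=
  Real.sqrt_nonneg _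

open Matrix in
lemma frob_mul_left {m n d : ℕ} (A : Matrix (Fin m) (Fin n) ℝ) (B : Matrix (Fin n) (Fin d) ℝ) :
    frobNorm (A * B) ≤ matOpNorm A * frobNorm B := by
  have key : ∀ j, ∑ i, ((A * B) i j) ^ 2 ≤ matOpNorm A ^ 2 * ∑ i, (B i j) ^ 2 := by
    intro j
    set v : EuclideanSpace ℝ (Fin n) := (WithLp.equiv 2 _).symm (fun i => B i j) with hv
    have h1 : ‖Matrix.toEuclideanLin A v‖ ≤ matOpNorm A * ‖v‖ := by
      have := (LinearMap.toContinuousLinearMap (Matrix.toEuclideanLin A)).le_opNorm v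
      simpa [matOpNorm] using this
    have h2 : ‖Matrix.toEuclideanLin A v‖ ^ 2 = ∑ i, ((A * B) i j) ^ 2 := by
      rw [EuclideanSpace.norm_eq, Real.sq_sqrt (by positivity)]
      congr 1; ext i
      have : (Matrix.toEuclideanLin A v) i = (A * B) i j := by
        rw [Matrix.toEuclideanLin_apply]
        simp [hv, Matrix.mulVec, dotProduct, Matrix.mul_apply]
      rw [this, Real.norm_eq_abs, sq_abs]
    have h3 : ‖v‖ ^ 2 = ∑ i, (B i j) ^ 2 := by
      rw [EuclideanSpace.norm_eq, Real.sq_sqrt (by positivity)]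
      congr 1; ext i
      simp [hv, Real.norm_eq_abs, sq_abs]
    calc ∑ i, ((A * B) i j) ^ 2 = ‖Matrix.toEuclideanLin A v‖ ^ 2 := h2.symm
      _ ≤ (matOpNorm A * ‖v‖) ^ 2 := by
          exact pow_le_pow_left₀ (norm_nonneg _) h1 2
      _ = matOpNorm A ^ 2 * ∑ i, (B i j) ^ 2 := by rw [mul_pow, h3]
  rw [frobNorm, frobNorm, Finset.sum_comm]
  calc Real.sqrt (∑ j, ∑ i, ((A * B) i j) ^ 2)
      ≤ Real.sqrt (matOpNorm A ^ 2 * ∑ j, ∑ i, (B i j) ^ 2) := by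
        apply Real.sqrt_le_sqrt
        rw [Finset.mul_sum]
        exact Finset.sum_le_sum fun j _ => key j
    _ = matOpNorm A * Real.sqrt (∑ j, ∑ i, (B i j) ^ 2) := by
        rw [Real.sqrt_mul (sq_nonneg _), Real.sqrt_sq (matOpNorm_nonneg A)]
    _ = matOpNorm A * Real.sqrt (∑ i, ∑ j, (B i j) ^ 2) := by rw [Finset.sum_comm]

open Matrix in
lemma frobNorm_transpose {n d : ℕ} (A : Matrix (Fin n) (Fin d) ℝ) :
    frobNorm Aᵀ = frobNorm A := by
  rw [frobNorm, frobNorm, Finset.sum_comm]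
  simp [Matrix.transpose_apply]

open Matrix in
lemma frob_mul_right {n m d : ℕ} (B : Matrix (Fin n) (Fin m) ℝ) (W : Matrix (Fin m) (Fin d) ℝ) :
    frobNorm (B * W) ≤ frobNorm B * matOpNorm W := by
  calc frobNorm (B * W) = frobNorm (B * W)ᵀ := (frobNorm_transpose _).symm
    _ = frobNorm (Wᵀ * Bᵀ) := by rw [Matrix.transpose_mul]
    _ ≤ matOpNorm Wᵀ * frobNorm Bᵀ := frob_mul_left _ _
    _ = frobNorm B * matOpNorm W := by rw [matOpNorm_transpose, frobNorm_transpose, mul_comm]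

open Matrix in
lemma frobNorm_eq_norm {n d : ℕ} (A : Matrix (Fin n) (Fin d) ℝ) :
    frobNorm A = @norm _ (Matrix.frobeniusSeminormedAddCommGroup).toNorm A := by
  rw [Matrix.frobenius_norm_def, frobNorm, Real.sqrt_eq_rpow]
  congr 1
  congr 1; ext i; congr 1; ext j
  rw [Real.norm_eq_abs, ← sq_abs, ← Real.rpow_natCast |A i j| 2]
  norm_num

open Matrix in
lemma frobNorm_add_le {n d : ℕ} (A B : Matrix (Fin n) (Fin d) ℝ) :
    frobNorm (A + B) ≤ frobNorm A + frobNorm B := by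
  rw [frobNorm_eq_norm, frobNorm_eq_norm, frobNorm_eq_norm]
  exact @norm_add_le _ (Matrix.frobeniusSeminormedAddCommGroup).toSeminormedAddGroup A B

open Matrix in
lemma frob_lipschitz {n d : ℕ} (σ : ℝ → ℝ) (τσ : ℝ) (hτσ : 0 ≤ τσ)
    (hσ : ∀ x y : ℝ, |σ x - σ y| ≤ τσ * |x - y|)
    (A B : Matrix (Fin n) (Fin d) ℝ) :
    frobNorm (A.map σ - B.map σ) ≤ τσ * frobNorm (A - B) := by
  rw [frobNorm, frobNorm]
  have h : ∀ i j, ((A.map σ - B.map σ) i j) ^ 2 ≤ τσ ^ 2 * ((A - B) i j) ^ 2 := by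
    intro i j
    have h1 : |σ (A i j) - σ (B i j)| ≤ τσ * |A i j - B i j| := hσ _ _
    have h2 := pow_le_pow_left₀ (abs_nonneg _) h1 2
    simpa [Matrix.sub_apply, Matrix.map_apply, sq_abs, mul_pow] using h2
  calc Real.sqrt (∑ i, ∑ j, ((A.map σ - B.map σ) i j) ^ 2)
      ≤ Real.sqrt (τσ ^ 2 * ∑ i, ∑ j, ((A - B) i j) ^ 2) := by
        apply Real.sqrt_le_sqrt
        rw [Finset.mul_sum]
        refine Finset.sum_le_sum fun i _ => ?_
        rw [Finset.mul_sum]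
        exact Finset.sum_le_sum fun j _ => h i j
    _ = τσ * Real.sqrt (∑ i, ∑ j, ((A - B) i j) ^ 2) := by
        rw [Real.sqrt_mul (sq_nonneg _), Real.sqrt_sq hτσ]

/-- Multi-layer GNN perturbation bound: for two `K`-layer graph convolutional networks
sharing the weights `W¹,…,W^K` and the initial features `H⁰`, driven by graph filters
`Ψᵢ` and `Ψⱼ` respectively, with `b = τ_σ τ_w τ_l`,
`‖H_i^K − H_j^K‖_F ≤ (∑_{t<K} b^t) · τ_σ τ_w τ_h · ‖Ψᵢ − Ψⱼ‖₂`, and if `b ≠ 1` this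
equals `((b^K − 1)/(b − 1)) · τ_σ τ_w τ_h · ‖Ψᵢ − Ψⱼ‖₂`. -/
theorem multilayer_gnn_perturbation_bound {n d K : ℕ} (hK : 1 ≤ K)
    (σ : ℝ → ℝ) (τσ : ℝ) (hτσ : 0 ≤ τσ)
    (hσ : ∀ x y : ℝ, |σ x - σ y| ≤ τσ * |x - y|)
    (Ψi Ψj : Matrix (Fin n) (Fin n) ℝ) (W : Fin K → Matrix (Fin d) (Fin d) ℝ)
    (H0 : Matrix (Fin n) (Fin d) ℝ) (Hi Hj : ℕ → Matrix (Fin n) (Fin d) ℝ)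
    (hHi0 : Hi 0 = H0) (hHj0 : Hj 0 = H0)
    (hHi : ∀ l : Fin K, Hi (l + 1) = ((Ψi * Hi l) * W l).map σ)
    (hHj : ∀ l : Fin K, Hj (l + 1) = ((Ψj * Hj l) * W l).map σ)
    (τw τh τl : ℝ) (hτw : 0 ≤ τw) (hτh : 0 ≤ τh) (hτl : 0 ≤ τl)
    (hW : ∀ l : Fin K, matOpNorm (W l) ≤ τw)
    (hH : ∀ l : ℕ, l ≤ K - 1 → frobNorm (Hi l) ≤ τh)
    (hΨj : matOpNorm Ψj ≤ τl) :
    frobNorm (Hi K - Hj K) ≤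
      (∑ t ∈ Finset.range K, (τσ * τw * τl) ^ t) * (τσ * τw * τh) * matOpNorm (Ψi - Ψj) ∧
    (τσ * τw * τl ≠ 1 →
      frobNorm (Hi K - Hj K) ≤
        (((τσ * τw * τl) ^ K - 1) / (τσ * τw * τl - 1)) * (τσ * τw * τh) *
          matOpNorm (Ψi - Ψj)) := by
  set b : ℝ := τσ * τw * τl with hb
  set c : ℝ := τσ * τw * τh with hc
  set Δ : ℝ := matOpNorm (Ψi - Ψj) with hΔ
  have hΔ0 : 0 ≤ Δ := matOpNorm_nonneg _
  have hb0 : 0 ≤ b := by positivity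
  have hc0 : 0 ≤ c := by positivity
  have key : ∀ l, l ≤ K →
      frobNorm (Hi l - Hj l) ≤ (∑ t ∈ Finset.range l, b ^ t) * c * Δ := by
    intro l
    induction l with
    | zero =>
      intro _
      simp only [hHi0, hHj0, sub_self, Finset.range_zero, Finset.sum_empty, zero_mul]
      rw [frobNorm]
      simp [Real.sqrt_zero]
    | succ l ih =>
      intro hl
      have hlK : l < K := hl
      have ihl := ih (le_of_lt hlK)
      set lF : Fin K := ⟨l, hlK⟩ with hlF
      have hWl := hW lF
      have hHil : frobNorm (Hi l) ≤ τh := hH l (by omega)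
      have hrecI := hHi lF
      have hrecJ := hHj lF
      simp only [hlF] at hrecI hrecJ
      have hstep : frobNorm (Hi (l + 1) - Hj (l + 1)) ≤ c * Δ + b * frobNorm (Hi l - Hj l) := by
        rw [hrecI, hrecJ]
        have h1 := frob_lipschitz σ τσ hτσ hσ ((Ψi * Hi l) * W lF) ((Ψj * Hj l) * W lF)
        have hsplit : (Ψi * Hi l) * W lF - (Ψj * Hj l) * W lF =
            ((Ψi - Ψj) * Hi l) * W lF + (Ψj * (Hi l - Hj l)) * W lF := by
          simp only [Matrix.sub_mul, Matrix.mul_sub]; abel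
        have h2 : frobNorm ((Ψi * Hi l) * W lF - (Ψj * Hj l) * W lF) ≤
            frobNorm (((Ψi - Ψj) * Hi l) * W lF) + frobNorm ((Ψj * (Hi l - Hj l)) * W lF) := by
          rw [hsplit]; exact frobNorm_add_le _ _
        have h3 : frobNorm (((Ψi - Ψj) * Hi l) * W lF) ≤ Δ * τh * τw := by
          calc frobNorm (((Ψi - Ψj) * Hi l) * W lF)
              ≤ frobNorm ((Ψi - Ψj) * Hi l) * matOpNorm (W lF) := frob_mul_right _ _
            _ ≤ (matOpNorm (Ψi - Ψj) * frobNorm (Hi l)) * matOpNorm (W lF) := by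
                apply mul_le_mul_of_nonneg_right (frob_mul_left _ _) (matOpNorm_nonneg _)
            _ ≤ Δ * τh * τw := by
                exact mul_le_mul (mul_le_mul_of_nonneg_left hHil hΔ0) hWl
                  (matOpNorm_nonneg _) (mul_nonneg hΔ0 hτh)
        have h4 : frobNorm ((Ψj * (Hi l - Hj l)) * W lF) ≤ τl * frobNorm (Hi l - Hj l) * τw := by
          calc frobNorm ((Ψj * (Hi l - Hj l)) * W lF)
              ≤ frobNorm (Ψj * (Hi l - Hj l)) * matOpNorm (W lF) := frob_mul_right _ _
            _ ≤ (matOpNorm Ψj * frobNorm (Hi l - Hj l)) * matOpNorm (W lF) := by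
                apply mul_le_mul_of_nonneg_right (frob_mul_left _ _) (matOpNorm_nonneg _)
            _ ≤ τl * frobNorm (Hi l - Hj l) * τw := by
                exact mul_le_mul (mul_le_mul_of_nonneg_right hΨj (frobNorm_nonneg' _)) hWl
                  (matOpNorm_nonneg _) (mul_nonneg hτl (frobNorm_nonneg' _))
        calc frobNorm (((Ψi * Hi l) * W lF).map σ - ((Ψj * Hj l) * W lF).map σ)
            ≤ τσ * frobNorm ((Ψi * Hi l) * W lF - (Ψj * Hj l) * W lF) := h1
          _ ≤ τσ * (Δ * τh * τw + τl * frobNorm (Hi l - Hj l) * τw) := by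
              apply mul_le_mul_of_nonneg_left (le_trans h2 (add_le_add h3 h4)) hτσ
          _ = c * Δ + b * frobNorm (Hi l - Hj l) := by ring
      calc frobNorm (Hi (l + 1) - Hj (l + 1)) ≤ c * Δ + b * frobNorm (Hi l - Hj l) := hstep
        _ ≤ c * Δ + b * ((∑ t ∈ Finset.range l, b ^ t) * c * Δ) :=
            add_le_add le_rfl (mul_le_mul_of_nonneg_left ihl hb0)
        _ = (∑ t ∈ Finset.range (l + 1), b ^ t) * c * Δ := by
            rw [geom_sum_succ]; ring
  refine ⟨key K le_rfl, fun hb1 => ?_⟩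
  rw [← geom_sum_eq hb1 K]
  exact key K le_rfl
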